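/- Let G be a finite solvable group, p a prime, and M a maximal subgroup of G of index p^s for some positive integer s. Then G has a chief factor of order p^s; consequently, for every prime p dividing |G|, S_p(G) ≤ r_p(G), where S_p(G) is the largest s such that G has a maximal subgroup of index p^s and r_p(G) is the largest k such that G has a chief factor of order p^k. -/

import Mathlib

/-- `M₂/M₁` is a chief factor of `G`: both are normal, `M₁ < M₂`, and there is
no normal subgroup strictly between them. -/
def IsChiefFactor (G : Type*) [Group G] (M₁ M₂ : Subgroup G) : Prop :=
  M₁.Normal ∧ M₂.Normal ∧ M₁ < M₂ ∧
    ¬ ∃ M : Subgroup G, M.Normal ∧ M₁ < M ∧ M < M₂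

section Aux

universe u

/-- Key inductive lemma: a finite solvable group with a maximal subgroup of
prime-power index `p ^ s` (with `s > 0`) has a chief factor of order `p ^ s`. -/
theorem chief_aux : ∀ (n : ℕ) (G : Type u) [Group G] [Finite G] [Group.IsSolvable G],
    Nat.card G ≤ n → ∀ (p : ℕ), p.Prime → ∀ (M : Subgroup G), IsCoatom M →
    ∀ (s : ℕ), 0 < s → M.index = p ^ s →
    ∃ M₁ M₂ : Subgroup G, IsChiefFactor G M₁ M₂ ∧ M₁.relIndex M₂ = p ^ s := by
  intro n
  induction n with
  | zero =>
    intro G _ _ _ hcard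
    exact absurd (Nat.le_antisymm hcard (Nat.zero_le _)) Nat.card_pos.ne'
  | succ n ih =>
    intro G _ _ _ hcard p hp M hM s hs hidx
    -- G is nontrivial
    have hbt : (⊥ : Subgroup G) ≠ ⊤ := by
      intro h
      apply hM.1
      rw [eq_top_iff, ← h]
      exact bot_le
    -- find a minimal nontrivial normal subgroup N
    have hwf : WellFoundedLT (Subgroup G) := Finite.to_wellFoundedLT
    obtain ⟨N, ⟨hNnorm, hNbot⟩, hNmin⟩ :=
      hwf.wf.has_min {K : Subgroup G | K.Normal ∧ K ≠ ⊥}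
        ⟨⊤, inferInstance, Ne.symm hbt⟩
    -- minimality rephrased
    have hmin : ∀ K : Subgroup G, K.Normal → K < N → K = ⊥ := by
      intro K hK hKN
      by_contra hKne
      exact hNmin K ⟨hK, hKne⟩ hKN
    -- N is abelian
    have hNab : ∀ a ∈ N, ∀ b ∈ N, a * b = b * a := by
      have hD : (⁅N, N⁆ : Subgroup G) = ⊥ := by
        apply hmin _ (Subgroup.commutator_normal N N)
        have hle : (⁅N, N⁆ : Subgroup G) ≤ N :=
          Subgroup.commutator_le.mpr fun a ha b hb => by
            have : a * b * a⁻¹ * b⁻¹ ∈ N :=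
              N.mul_mem (N.mul_mem (N.mul_mem ha hb) (N.inv_mem ha)) (N.inv_mem hb)
            simpa [commutatorElement_def] using this
        refine lt_of_le_of_ne hle fun hEq => ?_
        -- if ⁅N,N⁆ = N then N is its own derived subgroup, contradicting solvability
        have hcomm : commutator ↥N = ⊤ := by
          have hmap : Subgroup.map N.subtype (commutator ↥N) = N := by
            rw [commutator_def, Subgroup.map_commutator, ← MonoidHom.range_eq_map,
              N.range_subtype]
            exact hEq
          have hmap' : Subgroup.map N.subtype (⊤ : Subgroup ↥N) = N := by
            rw [← MonoidHom.range_eq_map, N.range_subtype]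
          exact Subgroup.map_injective N.subtype_injective (hmap.trans hmap'.symm)
        have hsolv : Group.IsSolvable ↥N := inferInstance
        obtain ⟨m, hm⟩ := hsolv.solvable
        have hall : ∀ m : ℕ, derivedSeries ↥N m = ⊤ := by
          intro m
          induction m with
          | zero => rfl
          | succ m ihm => rw [derivedSeries_succ, ihm, ← commutator_def, hcomm]
        rw [hall m] at hm
        apply hNbot
        rw [eq_bot_iff]
        intro x hx
        have : (⟨x, hx⟩ : ↥N) ∈ (⊥ : Subgroup ↥N) := hm ▸ Subgroup.mem_top _
        simpa using this
      intro a ha b hb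
      open scoped commutatorElement in
      have : ⁅a, b⁆ ∈ (⁅N, N⁆ : Subgroup G) := Subgroup.commutator_mem_commutator ha hb
      rw [hD] at this
      have h1 : a * b * a⁻¹ * b⁻¹ = 1 := by
        simpa [commutatorElement_def] using this
      have := mul_eq_one_iff_eq_inv.mp h1
      calc a * b = (a * b * a⁻¹ * b⁻¹) * (b * a) := by group
        _ = b * a := by rw [h1, one_mul]
    by_cases hNM : N ≤ M
    · -- pass to the quotient G ⧸ N
      let φ := QuotientGroup.mk' N
      have hsurj : Function.Surjective φ := QuotientGroup.mk'_surjective N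
      have hker : φ.ker = N := QuotientGroup.ker_mk' N
      -- M maps to a coatom of the quotient
      have hcomap_map : ∀ K : Subgroup G, N ≤ K → (K.map φ).comap φ = K := by
        intro K hK
        rw [Subgroup.comap_map_eq, hker, sup_eq_left.mpr hK]
      have hMcoatom : IsCoatom (M.map φ) := by
        constructor
        · intro h
          apply hM.1
          have h2 := congrArg (Subgroup.comap φ) h
          rwa [hcomap_map M hNM, Subgroup.comap_top] at h2
        · intro K hK
          have h1 : M < K.comap φ := by
            refine lt_of_le_of_ne ?_ ?_
            · rw [← hcomap_map M hNM]; exact Subgroup.comap_mono hK.le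
            · intro h
              apply hK.ne
              rw [← Subgroup.map_comap_eq_self_of_surjective hsurj K, ← h]
          have := hM.2 _ h1
          rw [← Subgroup.map_comap_eq_self_of_surjective hsurj K, this]
          simpa using Subgroup.map_top_of_surjective φ hsurj
      have hMidx : (M.map φ).index = p ^ s := by
        rw [M.index_map_eq hsurj (hker.le.trans hNM), hidx]
      -- the quotient is strictly smaller
      have hcardQ : Nat.card (G ⧸ N) ≤ n := by
        have h1 : N.index * Nat.card N = Nat.card G := N.index_mul_card
        have h2 : 1 < Nat.card N := (Subgroup.one_lt_card_iff_ne_bot N).mpr hNbot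
        have h3 : N.index = Nat.card (G ⧸ N) := rfl
        have h4 : 0 < N.index := Nat.pos_of_ne_zero fun h => by
          rw [h, zero_mul] at h1; exact Nat.card_pos.ne' h1.symm
        have : Nat.card (G ⧸ N) < Nat.card G := by
          rw [← h1, ← h3]
          exact (lt_mul_iff_one_lt_right h4).mpr h2
        omega
      obtain ⟨K₁, K₂, ⟨hK₁n, hK₂n, hK12, hKno⟩, hKrel⟩ :=
        ih (G ⧸ N) hcardQ p hp (M.map φ) hMcoatom s hs hMidx
      refine ⟨K₁.comap φ, K₂.comap φ, ⟨hK₁n.comap φ, hK₂n.comap φ, ?_, ?_⟩, ?_⟩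
      · refine lt_of_le_of_ne (Subgroup.comap_mono hK12.le) fun h => ?_
        exact hK12.ne (Subgroup.comap_injective hsurj h)
      · rintro ⟨L, hLnorm, hL1, hL2⟩
        have hNL : N ≤ L := by
          refine le_trans ?_ hL1.le
          intro x hx
          have hxk : x ∈ φ.ker := by rw [hker]; exact hx
          rw [Subgroup.mem_comap, MonoidHom.mem_ker.mp hxk]
          exact K₁.one_mem
        have hLcm : (L.map φ).comap φ = L := hcomap_map L hNL
        refine hKno ⟨L.map φ, hLnorm.map φ hsurj, ?_, ?_⟩
        · refine lt_of_le_of_ne ?_ fun h => ?_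
          · rw [← Subgroup.map_comap_eq_self_of_surjective hsurj K₁]
            exact Subgroup.map_mono hL1.le
          · apply hL1.ne'
            rw [← hLcm, h]
        · refine lt_of_le_of_ne ?_ fun h => ?_
          · rw [← Subgroup.map_comap_eq_self_of_surjective hsurj K₂]
            exact Subgroup.map_mono hL2.le
          · apply hL2.ne
            rw [← hLcm, h]
      · rw [Subgroup.relIndex_comap, Subgroup.map_comap_eq_self_of_surjective hsurj K₂,
          hKrel]
    · -- N ⊄ M : then N ⊓ M = ⊥ and N itself gives the chief factor
      have hsup : N ⊔ M = ⊤ := by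
        exact hM.2 _ (lt_of_le_of_ne le_sup_right fun h => hNM (le_sup_left.trans h.ge))
      have hKnorm : (N ⊓ M).Normal := by
        constructor
        intro x hx g
        have hg : g ∈ ((N ⊔ M : Subgroup G) : Set G) := by
          rw [hsup]; trivial
        rw [Subgroup.normal_mul N M] at hg
        obtain ⟨a, ha, b, hb, rfl⟩ := hg
        have hy : b * x * b⁻¹ ∈ N ⊓ M := by
          constructor
          · exact hNnorm.conj_mem x hx.1 b
          · exact M.mul_mem (M.mul_mem hb hx.2) (M.inv_mem hb)
        have hcomm : a * (b * x * b⁻¹) * a⁻¹ = b * x * b⁻¹ := by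
          have hc := hNab a ha _ hy.1
          rw [hc]
          group
        have heq : a * b * x * (a * b)⁻¹ = a * (b * x * b⁻¹) * a⁻¹ := by group
        rw [heq, hcomm]
        exact hy
      have hKbot : N ⊓ M = ⊥ := by
        apply hmin _ hKnorm
        refine lt_of_le_of_ne inf_le_left fun h => hNM ?_
        rw [← h]; exact inf_le_right
      have hcompl : N.IsComplement' M := by
        apply Subgroup.isComplement'_of_disjoint_and_mul_eq_univ
        · exact disjoint_iff.mpr hKbot
        · rw [← Subgroup.normal_mul N M, hsup]
          exact Subgroup.coe_top
      have hcard : Nat.card N = p ^ s := by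
        rw [← hcompl.index_eq_card, hidx]
      refine ⟨⊥, N, ⟨inferInstance, hNnorm, bot_lt_iff_ne_bot.mpr hNbot, ?_⟩, ?_⟩
      · rintro ⟨K, hKn, hK1, hK2⟩
        exact bot_lt_iff_ne_bot.mp hK1 (hmin K hKn hK2)
      · rw [Subgroup.relIndex_bot_left, hcard]

end Aux

theorem chief_factor_of_maximal_index (G : Type*) [Group G] [Finite G] [Group.IsSolvable G]
    (p : ℕ) (hp : p.Prime) (M : Subgroup G) (hM : IsCoatom M)
    (s : ℕ) (hs : 0 < s) (hidx : M.index = p ^ s) :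
    (∃ M₁ M₂ : Subgroup G, IsChiefFactor G M₁ M₂ ∧ M₁.relIndex M₂ = p ^ s) ∧
      ∀ q : ℕ, q.Prime → q ∣ Nat.card G →
        sSup {t : ℕ | ∃ M' : Subgroup G, IsCoatom M' ∧ M'.index = q ^ t} ≤
          sSup {k : ℕ | ∃ M₁ M₂ : Subgroup G, IsChiefFactor G M₁ M₂ ∧
            M₁.relIndex M₂ = q ^ k} := by
  constructor
  · exact chief_aux (Nat.card G) G le_rfl p hp M hM s hs hidx
  · intro q hq _
    set S := {t : ℕ | ∃ M' : Subgroup G, IsCoatom M' ∧ M'.index = q ^ t}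
    set R := {k : ℕ | ∃ M₁ M₂ : Subgroup G, IsChiefFactor G M₁ M₂ ∧
      M₁.relIndex M₂ = q ^ k}
    have hSR : S ⊆ R := by
      rintro t ⟨M', hM', hMidx⟩
      have ht : 0 < t := by
        rcases Nat.eq_zero_or_pos t with h | h
        · exfalso
          rw [h, pow_zero] at hMidx
          exact hM'.1 (Subgroup.index_eq_one.mp hMidx)
        · exact h
      exact chief_aux (Nat.card G) G le_rfl q hq M' hM' t ht hMidx
    have hRbdd : BddAbove R := by
      refine ⟨Nat.card G, ?_⟩
      rintro k ⟨M₁, M₂, ⟨_, _, h12, _⟩, hrel⟩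
      have h1 : M₁.relIndex M₂ * M₂.index = M₁.index :=
        Subgroup.relIndex_mul_index h12.le
      have h2 : q ^ k ∣ Nat.card G := by
        rw [← hrel]
        exact dvd_trans ⟨M₂.index, h1.symm⟩ M₁.index_dvd_card
      have h3 : q ^ k ≤ Nat.card G := Nat.le_of_dvd Nat.card_pos h2
      have h4 : k < q ^ k := Nat.lt_pow_self hq.one_lt
      omega
    rcases Set.eq_empty_or_nonempty S with h | h
    · rw [h, csSup_empty]
      exact bot_le
    · exact csSup_le_csSup hRbdd h hSR
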